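/- Let T be a bounded linear operator on a complex Hilbert space H with polar decomposition T = U|T|, and let T̃ = |T|^{1/2} U |T|^{1/2} denote its Aluthge transform. Then w(T) ≤ (1/2)‖T‖ + (1/2)·w(T̃). -/

import Mathlib

set_option maxHeartbeats 1600000

open ContinuousLinearMap

noncomputable def nr {E : Type*} [NormedAddCommGroup E] [InnerProductSpace ℂ E]
    (T : E →L[ℂ] E) : ℝ :=
  sSup {r : ℝ | ∃ x : E, ‖x‖ = 1 ∧ r = ‖(inner ℂ (T x) x : ℂ)‖}

noncomputable def er {E : Type*} [NormedAddCommGroup E] [InnerProductSpace ℂ E]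
    (B C : E →L[ℂ] E) : ℝ :=
  sSup {r : ℝ | ∃ x : E, ‖x‖ = 1 ∧
    r = Real.sqrt (‖(inner ℂ (B x) x : ℂ)‖ ^ 2 + ‖(inner ℂ (C x) x : ℂ)‖ ^ 2)}

lemma nr_nonneg {E : Type*} [NormedAddCommGroup E] [InnerProductSpace ℂ E]
    (T : E →L[ℂ] E) : 0 ≤ nr T := by
  apply Real.sSup_nonneg
  rintro r ⟨x, hx, rfl⟩
  positivity

lemma nr_bddAbove {E : Type*} [NormedAddCommGroup E] [InnerProductSpace ℂ E]
    (T : E →L[ℂ] E) :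
    BddAbove {r : ℝ | ∃ x : E, ‖x‖ = 1 ∧ r = ‖(inner ℂ (T x) x : ℂ)‖} := by
  refine ⟨‖T‖, ?_⟩
  rintro r ⟨x, hx, rfl⟩
  calc ‖(inner ℂ (T x) x : ℂ)‖ = ‖(inner ℂ (T x) x : ℂ)‖ := rfl
  _ ≤ ‖T x‖ * ‖x‖ := norm_inner_le_norm _ _
  _ ≤ ‖T‖ * ‖x‖ * ‖x‖ := by gcongr; exact T.le_opNorm x
  _ = ‖T‖ := by rw [hx]; ring

lemma abs_inner_le_nr {E : Type*} [NormedAddCommGroup E] [InnerProductSpace ℂ E]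
    (T : E →L[ℂ] E) (u : E) : ‖(inner ℂ (T u) u : ℂ)‖ ≤ nr T * ‖u‖ ^ 2 := by
  rcases eq_or_ne u 0 with rfl | hu
  · simp
  · have hu0 : 0 < ‖u‖ := norm_pos_iff.2 hu
    set e : E := (‖u‖ : ℂ)⁻¹ • u with he
    have hene : ‖e‖ = 1 := by
      rw [he, norm_smul, norm_inv]
      simp only [Complex.norm_real, norm_norm]
      exact inv_mul_cancel₀ hu0.ne'
    have hmem : ‖(inner ℂ (T e) e : ℂ)‖ ∈
        {r : ℝ | ∃ x : E, ‖x‖ = 1 ∧ r = ‖(inner ℂ (T x) x : ℂ)‖} := ⟨e, hene, rfl⟩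
    have hle : ‖(inner ℂ (T e) e : ℂ)‖ ≤ nr T := le_csSup (nr_bddAbove T) hmem
    have hcalc : ‖(inner ℂ (T e) e : ℂ)‖ = ‖u‖⁻¹ ^ 2 * ‖(inner ℂ (T u) u : ℂ)‖ := by
      rw [he]
      rw [map_smul, inner_smul_left, inner_smul_right]
      rw [norm_mul, norm_mul]
      simp only [norm_inv, Complex.norm_conj, Complex.norm_real, norm_norm]
      ring
    rw [hcalc] at hle
    have := mul_le_mul_of_nonneg_right hle (by positivity : (0:ℝ) ≤ ‖u‖ ^ 2)
    calc ‖(inner ℂ (T u) u : ℂ)‖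
        = ‖u‖⁻¹ ^ 2 * ‖(inner ℂ (T u) u : ℂ)‖ * ‖u‖ ^ 2 := by
          field_simp
    _ ≤ nr T * ‖u‖ ^ 2 := this

lemma aux_isUnit {E : Type*} [NormedAddCommGroup E] [InnerProductSpace ℂ E] [CompleteSpace E]
    (N : E →L[ℂ] E) (c : ℝ) (hc : ∀ u : E, ‖(inner ℂ (N u) u : ℂ)‖ ≤ c * ‖u‖ ^ 2)
    (lam : ℂ) (hl : c < ‖lam‖) :
    IsUnit (algebraMap ℂ (E →L[ℂ] E) lam - N) := by
  set G : E →L[ℂ] E := algebraMap ℂ (E →L[ℂ] E) lam - N with hGdef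
  set d : ℝ := ‖lam‖ - c with hd
  have hd0 : 0 < d := sub_pos.2 hl
  have hGapp : ∀ u, G u = lam • u - N u := by
    intro u
    simp [hGdef, Algebra.algebraMap_eq_smul_one]
  have hinner : ∀ u : E, d * ‖u‖ ^ 2 ≤ ‖(inner ℂ (G u) u : ℂ)‖ := by
    intro u
    have h1 : (inner ℂ (G u) u : ℂ) = (starRingEnd ℂ) lam * (‖u‖ : ℂ) ^ 2 - inner ℂ (N u) u := by
      rw [hGapp, inner_sub_left, inner_smul_left, inner_self_eq_norm_sq_to_K]
      norm_num
    have h2 : ‖((starRingEnd ℂ) lam * (‖u‖ : ℂ) ^ 2)‖ = ‖lam‖ * ‖u‖ ^ 2 := by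
      simp [norm_mul, Complex.norm_conj, ← Complex.ofReal_pow, Complex.norm_real, abs_of_nonneg (sq_nonneg ‖u‖)]
    calc d * ‖u‖ ^ 2 = ‖lam‖ * ‖u‖ ^ 2 - c * ‖u‖ ^ 2 := by ring
    _ ≤ ‖((starRingEnd ℂ) lam * (‖u‖:ℂ) ^ 2)‖ - ‖(inner ℂ (N u) u : ℂ)‖ := by
        rw [h2]; exact sub_le_sub_left (hc u) _
    _ ≤ ‖(inner ℂ (G u) u : ℂ)‖ := by
        rw [h1]; exact (norm_sub_norm_le _ _)
  have hinner' : ∀ u : E, d * ‖u‖ ^ 2 ≤ ‖(inner ℂ ((adjoint G) u) u : ℂ)‖ := by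
    intro u
    have : (inner ℂ ((adjoint G) u) u : ℂ) = (starRingEnd ℂ) (inner ℂ (G u) u : ℂ) := by
      rw [adjoint_inner_left, ← inner_conj_symm]
    rw [this, Complex.norm_conj]; exact hinner u
  have norm_bound : ∀ (F : E →L[ℂ] E), (∀ u : E, d * ‖u‖ ^ 2 ≤ ‖(inner ℂ (F u) u : ℂ)‖) →
      ∀ u : E, ‖u‖ ≤ ((⟨d⁻¹, inv_nonneg.2 hd0.le⟩ : NNReal) : ℝ) * ‖F u‖ := by
    intro F hF u
    rcases eq_or_ne u 0 with rfl | hu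
    · simp
    have h1 : d * ‖u‖ ^ 2 ≤ ‖F u‖ * ‖u‖ := by
      refine (hF u).trans ?_
      exact norm_inner_le_norm _ _
    have hu0 : 0 < ‖u‖ := norm_pos_iff.2 hu
    have h2 : d * ‖u‖ ≤ ‖F u‖ := by nlinarith
    show ‖u‖ ≤ d⁻¹ * ‖F u‖
    rw [inv_mul_eq_div, le_div_iff₀ hd0]
    linarith
  have hanti : AntilipschitzWith (⟨d⁻¹, inv_nonneg.2 hd0.le⟩ : NNReal) G :=
    G.antilipschitz_of_bound (norm_bound G hinner)
  have hanti' : AntilipschitzWith (⟨d⁻¹, inv_nonneg.2 hd0.le⟩ : NNReal) (adjoint G) :=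
    (adjoint G).antilipschitz_of_bound (norm_bound (adjoint G) hinner')
  have hker : LinearMap.ker (G : E →ₗ[ℂ] E) = ⊥ := LinearMap.ker_eq_bot.2 hanti.injective
  have hclosed : IsClosed (LinearMap.range (G : E →ₗ[ℂ] E) : Set E) := by
    have := hanti.isClosed_range G.uniformContinuous
    rw [LinearMap.coe_range]; exact this
  haveI : CompleteSpace (LinearMap.range (G : E →ₗ[ℂ] E) : Submodule ℂ E) := hclosed.completeSpace_coe
  have hrange : LinearMap.range (G : E →ₗ[ℂ] E) = ⊤ := by
    rw [← Submodule.orthogonal_eq_bot_iff]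
    rw [Submodule.eq_bot_iff]
    intro y hy
    have hGy : adjoint G y = 0 := by
      have h0 : (inner ℂ ((adjoint G) y) ((adjoint G) y) : ℂ) = 0 := by
        rw [adjoint_inner_left, ← inner_conj_symm]
        erw [(Submodule.mem_orthogonal _ y).1 hy _ ⟨(adjoint G) y, rfl⟩]
        simp
      exact inner_self_eq_zero.1 h0
    exact hanti'.injective (show (adjoint G) y = (adjoint G) 0 by simp [hGy])
  let e := ContinuousLinearEquiv.ofBijective G hker hrange
  refine ⟨⟨G, e.symm.toContinuousLinearMap, ?_, ?_⟩, rfl⟩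
  · ext x
    exact ContinuousLinearEquiv.ofBijective_apply_symm_apply G hker hrange x
  · ext x
    exact ContinuousLinearEquiv.ofBijective_symm_apply_apply G hker hrange x

lemma aux_norm_bound {H : Type*} [NormedAddCommGroup H] [InnerProductSpace ℂ H] [CompleteSpace H]
    (T U absT sqrtAbsT : H →L[ℂ] H)
    (habs_sa : IsSelfAdjoint absT)
    (habs_sq : absT * absT = adjoint T * T)
    (hsqrt_sa : IsSelfAdjoint sqrtAbsT)
    (hsqrt_sq : sqrtAbsT * sqrtAbsT = absT)
    (hpolar : T = U * absT)
    (hpartial : U * adjoint U * U = U)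
    (z : ℂ) (hz : ‖z‖ = 1) :
    ‖z • T + ((starRingEnd ℂ) z) • adjoint T‖ ≤ ‖T‖ + nr (sqrtAbsT * U * sqrtAbsT) := by
  have hA_star : star absT = absT := habs_sa.star_eq
  have hS_star : star sqrtAbsT = sqrtAbsT := hsqrt_sa.star_eq
  have hT_adj : adjoint T = absT * adjoint U := by
    calc adjoint T = star T := (star_eq_adjoint _).symm
    _ = star (U * absT) := by rw [hpolar]
    _ = star absT * star U := star_mul _ _
    _ = absT * adjoint U := by rw [hA_star, star_eq_adjoint]
  have hnormA : ‖absT‖ = ‖T‖ := by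
    have h1 : ‖absT‖ * ‖absT‖ = ‖T‖ * ‖T‖ := by
      calc ‖absT‖ * ‖absT‖ = ‖star absT * absT‖ := CStarRing.norm_star_mul_self.symm
      _ = ‖adjoint T * T‖ := by rw [hA_star, habs_sq]
      _ = ‖star T * T‖ := by rw [star_eq_adjoint]
      _ = ‖T‖ * ‖T‖ := CStarRing.norm_star_mul_self
    nlinarith [norm_nonneg absT, norm_nonneg T]
  have hnormS : ‖sqrtAbsT‖ * ‖sqrtAbsT‖ = ‖T‖ := by
    calc ‖sqrtAbsT‖ * ‖sqrtAbsT‖ = ‖star sqrtAbsT * sqrtAbsT‖ := CStarRing.norm_star_mul_self.symm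
    _ = ‖absT‖ := by rw [hS_star, hsqrt_sq]
    _ = ‖T‖ := hnormA
  have hPP : (adjoint U * U) * (adjoint U * U) = adjoint U * U := by
    have h := congrArg (fun X => adjoint U * X) hpartial
    simp only [← mul_assoc] at h ⊢
    exact h
  have hP_star : star (adjoint U * U) = adjoint U * U := by
    simp [star_mul, star_eq_adjoint, adjoint_adjoint]
  have hP_norm : ‖adjoint U * U‖ ≤ 1 := by
    have h1 : ‖adjoint U * U‖ * ‖adjoint U * U‖ = ‖adjoint U * U‖ := by
      calc ‖adjoint U * U‖ * ‖adjoint U * U‖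
          = ‖star (adjoint U * U) * (adjoint U * U)‖ := CStarRing.norm_star_mul_self.symm
      _ = ‖(adjoint U * U) * (adjoint U * U)‖ := by rw [hP_star]
      _ = ‖adjoint U * U‖ := by rw [hPP]
    nlinarith [norm_nonneg (adjoint U * U)]
  set Tt : H →L[ℂ] H := sqrtAbsT * U * sqrtAbsT with hTt
  have hTt_adj : adjoint Tt = sqrtAbsT * adjoint U * sqrtAbsT := by
    rw [hTt, ← star_eq_adjoint]
    simp only [star_mul, hS_star, star_eq_adjoint, mul_assoc]
  have hQ_norm : ‖sqrtAbsT * (adjoint U * U) * sqrtAbsT‖ ≤ ‖T‖ := by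
    calc ‖sqrtAbsT * (adjoint U * U) * sqrtAbsT‖
        ≤ ‖sqrtAbsT * (adjoint U * U)‖ * ‖sqrtAbsT‖ := norm_mul_le _ _
    _ ≤ ‖sqrtAbsT‖ * ‖adjoint U * U‖ * ‖sqrtAbsT‖ := by
        gcongr; exact norm_mul_le _ _
    _ ≤ ‖sqrtAbsT‖ * 1 * ‖sqrtAbsT‖ := by
        gcongr
    _ = ‖T‖ := by rw [mul_one, hnormS]
  have hz1 : (starRingEnd ℂ) z * z = 1 := by
    rw [mul_comm, Complex.mul_conj, Complex.normSq_eq_norm_sq, hz]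
    norm_num
  set cc : ℝ := ‖T‖ + nr Tt with hcc
  have hcc0 : 0 ≤ cc := add_nonneg (norm_nonneg _) (nr_nonneg _)
  -- the doubled Hilbert space
  set R : H →L[ℂ] WithLp 2 (H × H) :=
    (WithLp.prodContinuousLinearEquiv 2 ℂ H H).symm.toContinuousLinearMap.comp
      ((sqrtAbsT).prod (((starRingEnd ℂ) z) • (sqrtAbsT * adjoint U))) with hR
  set C : WithLp 2 (H × H) →L[ℂ] H :=
    ((z • (U * sqrtAbsT)).coprod sqrtAbsT).comp
      (WithLp.prodContinuousLinearEquiv 2 ℂ H H).toContinuousLinearMap with hC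
  set M : WithLp 2 (H × H) →L[ℂ] WithLp 2 (H × H) := R.comp C with hM
  have hMw : ∀ w, M w = R (C w) := fun w => rfl
  have hRfst : ∀ x : H, (R x).fst = sqrtAbsT x := by
    intro x
    simp [hR, WithLp.prodContinuousLinearEquiv_symm_apply]
  have hRsnd : ∀ x : H, (R x).snd = ((starRingEnd ℂ) z) • (sqrtAbsT (adjoint U x)) := by
    intro x
    simp [hR, WithLp.prodContinuousLinearEquiv_symm_apply, ContinuousLinearMap.mul_apply]
  have hCapp : ∀ w : WithLp 2 (H × H),
      C w = z • (U (sqrtAbsT w.fst)) + sqrtAbsT w.snd := by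
    intro w
    simp [hC, WithLp.prodContinuousLinearEquiv_apply, ContinuousLinearMap.mul_apply]
  set D : H →L[ℂ] H := z • T + ((starRingEnd ℂ) z) • adjoint T with hD
  have hCR : ∀ x : H, C (R x) = D x := by
    intro x
    rw [hCapp, hRfst, hRsnd, map_smul]
    have h1 : sqrtAbsT (sqrtAbsT x) = absT x := by rw [← ContinuousLinearMap.mul_apply, hsqrt_sq]
    have h2 : sqrtAbsT (sqrtAbsT (adjoint U x)) = absT (adjoint U x) := by
      rw [← ContinuousLinearMap.mul_apply, hsqrt_sq]
    rw [h1, h2, hD]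
    have h3 : U (absT x) = T x := by rw [← ContinuousLinearMap.mul_apply, ← hpolar]
    have h4 : absT (adjoint U x) = adjoint T x := by rw [← ContinuousLinearMap.mul_apply, ← hT_adj]
    rw [h3, h4]
    simp
  have hMfst : ∀ w : WithLp 2 (H × H), (M w).fst = z • Tt w.fst + absT w.snd := by
    intro w
    rw [hMw, hRfst, hCapp, map_add, map_smul]
    have h1 : sqrtAbsT (U (sqrtAbsT w.fst)) = Tt w.fst := by
      rw [hTt]; simp [ContinuousLinearMap.mul_apply]
    have h2 : sqrtAbsT (sqrtAbsT w.snd) = absT w.snd := by rw [← ContinuousLinearMap.mul_apply, hsqrt_sq]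
    rw [h1, h2]
  have hMsnd : ∀ w : WithLp 2 (H × H),
      (M w).snd = (sqrtAbsT * (adjoint U * U) * sqrtAbsT) w.fst
        + ((starRingEnd ℂ) z) • (adjoint Tt w.snd) := by
    intro w
    have h1 : sqrtAbsT (adjoint U (U (sqrtAbsT w.fst)))
        = (sqrtAbsT * (adjoint U * U) * sqrtAbsT) w.fst := by simp [ContinuousLinearMap.mul_apply]
    have h2 : sqrtAbsT (adjoint U (sqrtAbsT w.snd)) = adjoint Tt w.snd := by
      rw [hTt_adj]; simp [ContinuousLinearMap.mul_apply]
    rw [hMw, hRsnd, hCapp]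
    simp only [map_add, map_smul, smul_add, smul_smul, hz1, one_smul]
    rw [h1, h2]
  have hM_bound : ∀ w : WithLp 2 (H × H), ‖(inner ℂ (M w) w : ℂ)‖ ≤ cc * ‖w‖ ^ 2 := by
    intro w
    have hsplit : (inner ℂ (M w) w : ℂ)
        = inner ℂ ((M w).fst) w.fst + inner ℂ ((M w).snd) w.snd := WithLp.prod_inner_apply _ _
    rw [hsplit, hMfst w, hMsnd w, inner_add_left, inner_add_left, inner_smul_left,
      inner_smul_left]
    have habs : ∀ a b c d : ℂ, ‖(a + b + (c + d))‖
        ≤ ‖a‖ + ‖b‖ + (‖c‖ + ‖d‖) := by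
      intro a b c d
      refine (norm_add_le _ _).trans ?_
      gcongr <;> exact norm_add_le _ _
    refine le_trans (habs _ _ _ _) ?_
    have e1 : ‖((starRingEnd ℂ) z * inner ℂ (Tt w.fst) w.fst)‖
        ≤ nr Tt * ‖w.fst‖ ^ 2 := by
      rw [norm_mul, Complex.norm_conj, hz, one_mul]
      exact abs_inner_le_nr Tt w.fst
    have e2 : ‖(inner ℂ (absT w.snd) w.fst : ℂ)‖ ≤ ‖T‖ * ‖w.snd‖ * ‖w.fst‖ := by
      calc ‖(inner ℂ (absT w.snd) w.fst : ℂ)‖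
          = ‖(inner ℂ (absT w.snd) w.fst : ℂ)‖ := rfl
      _ ≤ ‖absT w.snd‖ * ‖w.fst‖ := norm_inner_le_norm _ _
      _ ≤ ‖absT‖ * ‖w.snd‖ * ‖w.fst‖ := by gcongr; exact le_opNorm _ _
      _ = ‖T‖ * ‖w.snd‖ * ‖w.fst‖ := by rw [hnormA]
    have e3 : ‖(inner ℂ ((sqrtAbsT * (adjoint U * U) * sqrtAbsT) w.fst) w.snd : ℂ)‖
        ≤ ‖T‖ * ‖w.fst‖ * ‖w.snd‖ := by
      calc ‖(inner ℂ ((sqrtAbsT * (adjoint U * U) * sqrtAbsT) w.fst) w.snd : ℂ)‖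
          = ‖(inner ℂ ((sqrtAbsT * (adjoint U * U) * sqrtAbsT) w.fst) w.snd : ℂ)‖ :=
            rfl
      _ ≤ ‖(sqrtAbsT * (adjoint U * U) * sqrtAbsT) w.fst‖ * ‖w.snd‖ := norm_inner_le_norm _ _
      _ ≤ ‖sqrtAbsT * (adjoint U * U) * sqrtAbsT‖ * ‖w.fst‖ * ‖w.snd‖ := by
          gcongr; exact le_opNorm _ _
      _ ≤ ‖T‖ * ‖w.fst‖ * ‖w.snd‖ := by gcongr
    have e4 : ‖((starRingEnd ℂ) ((starRingEnd ℂ) z) * inner ℂ (adjoint Tt w.snd) w.snd)‖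
        ≤ nr Tt * ‖w.snd‖ ^ 2 := by
      rw [norm_mul]
      have hconj : (inner ℂ (adjoint Tt w.snd) w.snd : ℂ)
          = (starRingEnd ℂ) (inner ℂ (Tt w.snd) w.snd : ℂ) := by
        rw [adjoint_inner_left, ← inner_conj_symm]
      rw [hconj, Complex.norm_conj, Complex.norm_conj, Complex.norm_conj, hz, one_mul]
      exact abs_inner_le_nr Tt w.snd
    have hwn : ‖w‖ ^ 2 = ‖w.fst‖ ^ 2 + ‖w.snd‖ ^ 2 := WithLp.prod_norm_sq_eq_of_L2 _
    rw [hcc, hwn]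
    nlinarith [e1, e2, e3, e4, sq_nonneg (‖w.fst‖ - ‖w.snd‖), nr_nonneg Tt,
      norm_nonneg T, norm_nonneg w.fst, norm_nonneg w.snd]
  have hDsa : IsSelfAdjoint D := by
    have hstar : star D = D := by
      rw [hD, star_add, star_smul, star_smul, star_eq_adjoint, star_eq_adjoint (adjoint T),
        adjoint_adjoint]
      simp only [RCLike.star_def, Complex.conj_conj]
      exact add_comm _ _
    exact hstar
  have hspec : ∀ lam ∈ spectrum ℂ D, ‖lam‖ ≤ cc := by
    intro lam hlam
    by_contra hgt
    push_neg at hgt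
    have hlam0 : lam ≠ 0 := by
      intro h
      rw [h] at hgt
      simp only [norm_zero] at hgt
      exact absurd hgt (not_lt.2 hcc0)
    obtain ⟨wu, hwu⟩ := aux_isUnit M cc hM_bound lam hgt
    set W : WithLp 2 (H × H) →L[ℂ] WithLp 2 (H × H) := ↑wu⁻¹ with hWdef
    have hW1 : (algebraMap ℂ (WithLp 2 (H × H) →L[ℂ] WithLp 2 (H × H)) lam - M) * W = 1 := by
      rw [← hwu]; exact wu.mul_inv
    have hW2 : W * (algebraMap ℂ (WithLp 2 (H × H) →L[ℂ] WithLp 2 (H × H)) lam - M) = 1 := by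
      rw [← hwu]; exact wu.inv_mul
    have hW1' : ∀ y, lam • W y - M (W y) = y := by
      intro y
      have h := congrArg (fun f : WithLp 2 (H × H) →L[ℂ] WithLp 2 (H × H) => f y) hW1
      simpa [ContinuousLinearMap.mul_apply, sub_apply, Algebra.algebraMap_eq_smul_one, smul_apply, ContinuousLinearMap.one_apply] using h
    have hW2' : ∀ y, W (lam • y - M y) = y := by
      intro y
      have h := congrArg (fun f : WithLp 2 (H × H) →L[ℂ] WithLp 2 (H × H) => f y) hW2
      simpa [ContinuousLinearMap.mul_apply, sub_apply, Algebra.algebraMap_eq_smul_one, smul_apply, ContinuousLinearMap.one_apply] using h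
    set Einv : H →L[ℂ] H := lam⁻¹ • ((1 : H →L[ℂ] H) + C.comp (W.comp R)) with hEinv
    have hEapp : ∀ x : H, Einv x = lam⁻¹ • (x + C (W (R x))) := by
      intro x
      rw [hEinv]
      simp only [smul_apply, add_apply, ContinuousLinearMap.one_apply, coe_comp', Function.comp_apply]
    have hDapp' : ∀ x : H, D x = C (R x) := fun x => (hCR x).symm
    refine (spectrum.mem_iff.1 hlam) ?_
    refine ⟨⟨algebraMap ℂ (H →L[ℂ] H) lam - D, Einv, ?_, ?_⟩, rfl⟩
    · ext x
      have hRE : R (Einv x) = W (R x) := by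
        rw [hEapp, map_smul, map_add]
        have hMb : M (W (R x)) = lam • W (R x) - R x := by
          have h := hW1' (R x)
          rw [sub_eq_iff_eq_add] at h
          rw [h]
          abel
        have hRC : R (C (W (R x))) = M (W (R x)) := (hMw _).symm
        rw [hRC, hMb]
        have hh : R x + (lam • W (R x) - R x) = lam • W (R x) := by abel
        rw [hh, smul_smul, inv_mul_cancel₀ hlam0, one_smul]
      simp only [ContinuousLinearMap.mul_apply, sub_apply, Algebra.algebraMap_eq_smul_one, smul_apply, ContinuousLinearMap.one_apply]
      rw [hDapp', hRE, hEapp, smul_smul, mul_inv_cancel₀ hlam0, one_smul]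
      exact add_sub_cancel_right _ _
    · ext x
      simp only [ContinuousLinearMap.mul_apply, sub_apply, Algebra.algebraMap_eq_smul_one, smul_apply, ContinuousLinearMap.one_apply]
      rw [hDapp' x]
      have hRG : R (lam • x - C (R x)) = lam • R x - M (R x) := by
        rw [map_sub, map_smul, hMw]
      rw [hEapp, hRG, hW2' (R x), sub_add_cancel, smul_smul, inv_mul_cancel₀ hlam0, one_smul]
  have hrfl : spectralRadius ℂ D = ⨆ k ∈ spectrum ℂ D, (‖k‖₊ : ENNReal) := rfl
  have h1 : spectralRadius ℂ D ≤ ENNReal.ofReal cc := by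
    rw [hrfl]
    refine iSup₂_le fun k hk => ?_
    rw [← enorm_eq_nnnorm, ← ofReal_norm]
    refine ENNReal.ofReal_le_ofReal ?_
    exact hspec k hk
  rw [hDsa.spectralRadius_eq_nnnorm, ← enorm_eq_nnnorm, ← ofReal_norm] at h1
  exact (ENNReal.ofReal_le_ofReal_iff hcc0).1 h1

theorem stmt_19 {H : Type*} [NormedAddCommGroup H] [InnerProductSpace ℂ H] [CompleteSpace H]
    (T U absT sqrtAbsT : H →L[ℂ] H)
    (habs_sa : IsSelfAdjoint absT) (habs_pos : 0 ≤ absT)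
    (habs_sq : absT * absT = adjoint T * T)
    (hsqrt_sa : IsSelfAdjoint sqrtAbsT) (hsqrt_pos : 0 ≤ sqrtAbsT)
    (hsqrt_sq : sqrtAbsT * sqrtAbsT = absT)
    (hpolar : T = U * absT)
    (hpartial : U * adjoint U * U = U) :
    nr T ≤ (1 / 2) * ‖T‖ + (1 / 2) * nr (sqrtAbsT * U * sqrtAbsT) := by
  have hnr0 := nr_nonneg (sqrtAbsT * U * sqrtAbsT)
  have hT0 := norm_nonneg T
  refine Real.sSup_le ?_ (by linarith)
  rintro r ⟨x, hx, rfl⟩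
  rcases eq_or_ne (inner ℂ (T x) x : ℂ) 0 with h0 | h0
  · rw [h0, norm_zero]
    linarith
  · set ζ : ℂ := (inner ℂ (T x) x : ℂ) with hζ
    have hζ0 : (0:ℝ) < ‖ζ‖ := norm_pos_iff.2 h0
    set z : ℂ := ζ / ((‖ζ‖ : ℝ) : ℂ) with hzdef
    have hne : ((‖ζ‖ : ℝ) : ℂ) ≠ 0 := by exact_mod_cast hζ0.ne'
    have hz : ‖z‖ = 1 := by
      rw [hzdef, norm_div, Complex.norm_real, norm_norm, div_self hζ0.ne']
    have hbound := aux_norm_bound T U absT sqrtAbsT habs_sa habs_sq hsqrt_sa hsqrt_sq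
      hpolar hpartial z hz
    set D : H →L[ℂ] H := z • T + ((starRingEnd ℂ) z) • adjoint T with hD
    have h1 : (inner ℂ (adjoint T x) x : ℂ) = (starRingEnd ℂ) ζ := by
      rw [adjoint_inner_left, ← inner_conj_symm]
    have hm : (starRingEnd ℂ) ζ * ζ = ((‖ζ‖ : ℝ) : ℂ) * ((‖ζ‖ : ℝ) : ℂ) := by
      rw [mul_comm, Complex.mul_conj, Complex.normSq_eq_norm_sq]
      push_cast
      ring
    have hinner : (inner ℂ (D x) x : ℂ) = 2 * ((‖ζ‖ : ℝ) : ℂ) := by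
      rw [hD, add_apply, smul_apply, smul_apply, inner_add_left, inner_smul_left,
        inner_smul_left, h1, ← hζ]
      simp only [Complex.conj_conj]
      rw [hzdef, map_div₀, Complex.conj_ofReal]
      field_simp
      linear_combination (2:ℂ) * hm
    have c1 : ‖(inner ℂ (D x) x : ℂ)‖ = 2 * ‖ζ‖ := by
      rw [hinner, norm_mul, Complex.norm_real, norm_norm]
      norm_num
    have c2 : ‖(inner ℂ (D x) x : ℂ)‖ ≤ ‖D‖ := by
      calc ‖(inner ℂ (D x) x : ℂ)‖ = ‖(inner ℂ (D x) x : ℂ)‖ := rfl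
      _ ≤ ‖D x‖ * ‖x‖ := norm_inner_le_norm _ _
      _ ≤ ‖D‖ * ‖x‖ * ‖x‖ := by gcongr; exact le_opNorm _ _
      _ = ‖D‖ := by rw [hx]; ring
    rw [c1] at c2
    linarith
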